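/- Let H be a spanning subgraph of K_n, c : E(K_n) → {−1,1}, and for distinct vertices u,v let H_{uv} be the copy of H obtained by exchanging the roles of u and v. Then ∑_{uv} c(δ_{H_{uv}}(uv)), summed over all unordered pairs uv, equals ∑_{uv ∉ E(H)} (d_H(u)+d_H(v))·c(uv) + ∑_{uv ∈ E(H)} (d_H(u)+d_H(v)−2)·c(uv). -/

import Mathlib

open Finset

section Helpers
variable {V : Type*} [Fintype V] [DecidableEq V]

lemma half_sym {W : Type*} [Fintype W] [LinearOrder W] (g : W → W → ℝ)
    (hsym : ∀ u v, g u v = g v u) (hdiag : ∀ u, g u u = 0) :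
    ∑ u : W, ∑ v ∈ Finset.univ.filter (fun v => u < v), g u v
      = (1 / 2) * ∑ u : W, ∑ v : W, g u v := by
  have key : ∑ u : W, ∑ v : W, g u v
      = 2 * ∑ u : W, ∑ v ∈ Finset.univ.filter (fun v => u < v), g u v := by
    have hsplit : ∀ u : W, ∑ v : W, g u v
        = (∑ v ∈ Finset.univ.filter (fun v => u < v), g u v)
          + ∑ v ∈ Finset.univ.filter (fun v => v < u), g u v := by
      intro u
      rw [← Finset.sum_filter_add_sum_filter_not Finset.univ (fun v => u < v) (g u)]
      congr 1
      rw [← Finset.sum_filter_add_sum_filter_not (Finset.univ.filter fun v => ¬ u < v)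
        (fun v => v < u) (g u), Finset.filter_filter, Finset.filter_filter]
      have h1 : Finset.univ.filter (fun v => ¬ u < v ∧ v < u)
          = Finset.univ.filter (fun v => v < u) := by
        apply Finset.filter_congr; intro v _; simp only [and_iff_right_iff_imp]
        intro h; exact not_lt_of_gt h
      have h2 : Finset.univ.filter (fun v : W => ¬ u < v ∧ ¬ v < u) = {u} := by
        ext v; simp [le_antisymm_iff, eq_comm, not_lt, and_comm]
      rw [h1, h2, Finset.sum_singleton, hdiag, add_zero]
    have hswap : ∑ u : W, ∑ v ∈ Finset.univ.filter (fun v => v < u), g u v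
        = ∑ u : W, ∑ v ∈ Finset.univ.filter (fun v => u < v), g u v := by
      have l1 : ∀ u : W, ∑ v ∈ Finset.univ.filter (fun v => v < u), g u v
          = ∑ v : W, if v < u then g u v else 0 := fun u => by rw [Finset.sum_filter]
      have l2 : ∀ u : W, ∑ v ∈ Finset.univ.filter (fun v => u < v), g u v
          = ∑ v : W, if u < v then g u v else 0 := fun u => by rw [Finset.sum_filter]
      simp only [l1, l2]
      rw [Finset.sum_comm]
      refine Finset.sum_congr rfl fun u _ => Finset.sum_congr rfl fun v _ => ?_
      by_cases h : u < v <;> simp [h, hsym u v]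
    simp only [hsplit, Finset.sum_add_distrib, hswap]; ring
  rw [key]; ring

end Helpers

/-- `swapGraph H u v` is the isomorphic copy `H_{uv}` of `H` in which the vertices `u` and `v`
have exchanged their roles. -/
def swapGraph {V : Type*} [DecidableEq V] (H : SimpleGraph V) (u v : V) : SimpleGraph V where
  Adj a b := H.Adj (Equiv.swap u v a) (Equiv.swap u v b)
  symm := ⟨fun a b h => H.adj_symm h⟩
  loopless := ⟨fun a h => H.irrefl h⟩

instance {V : Type*} [DecidableEq V] (H : SimpleGraph V) [DecidableRel H.Adj] (u v : V) :
    DecidableRel (swapGraph H u v).Adj :=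
  fun a b => inferInstanceAs (Decidable (H.Adj (Equiv.swap u v a) (Equiv.swap u v b)))

section Helpers2
variable {V : Type*} [Fintype V] [DecidableEq V]

def deltaGraph (H : SimpleGraph V) (u v : V) : SimpleGraph V where
  Adj a b := (swapGraph H u v).Adj a b ∧
    ((u ∈ s(a, b) ∨ v ∈ s(a, b)) ∧ ¬(u ∈ s(a, b) ∧ v ∈ s(a, b)))
  symm := ⟨fun a b h => by
    refine ⟨(swapGraph H u v).adj_symm h.1, ?_⟩
    rw [Sym2.eq_swap]; exact h.2⟩
  loopless := ⟨fun a h => (swapGraph H u v).irrefl h.1⟩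

instance (H : SimpleGraph V) [DecidableRel H.Adj] (u v : V) :
    DecidableRel (deltaGraph H u v).Adj :=
  fun a b => inferInstanceAs (Decidable (_ ∧ _))

lemma delta_edgeFinset (H : SimpleGraph V) [DecidableRel H.Adj] (u v : V) :
    (swapGraph H u v).edgeFinset.filter
        (fun e => (u ∈ e ∨ v ∈ e) ∧ ¬(u ∈ e ∧ v ∈ e))
      = (deltaGraph H u v).edgeFinset := by
  ext e
  induction e using Sym2.ind with
  | _ a b =>
    rw [Finset.mem_filter, SimpleGraph.mem_edgeFinset, SimpleGraph.mem_edgeFinset]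
    simp [deltaGraph]

lemma delta_adj_iff (H : SimpleGraph V) {u v : V} (huv : u ≠ v) (a b : V) :
    (deltaGraph H u v).Adj a b ↔
      (a = u ∧ (H.Adj v b ∧ b ≠ u ∧ b ≠ v)) ∨ (a = v ∧ (H.Adj u b ∧ b ≠ u ∧ b ≠ v))
      ∨ (b = u ∧ (H.Adj v a ∧ a ≠ u ∧ a ≠ v)) ∨ (b = v ∧ (H.Adj u a ∧ a ≠ u ∧ a ≠ v)) := by
  by_cases hau : a = u <;> by_cases hav : a = v <;> by_cases hbu : b = u <;> by_cases hbv : b = v <;>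
    simp_all [deltaGraph, swapGraph, Sym2.mem_iff, Equiv.swap_apply_left, Equiv.swap_apply_right,
      Equiv.swap_apply_of_ne_of_ne, eq_comm, H.irrefl] <;>
    tauto

lemma ite_split4 {P C1 C2 C3 C4 : Prop} [Decidable P] [Decidable C1] [Decidable C2]
    [Decidable C3] [Decidable C4] (h : P ↔ C1 ∨ C2 ∨ C3 ∨ C4)
    (h12 : ¬(C1 ∧ C2)) (h13 : ¬(C1 ∧ C3)) (h14 : ¬(C1 ∧ C4))
    (h23 : ¬(C2 ∧ C3)) (h24 : ¬(C2 ∧ C4)) (h34 : ¬(C3 ∧ C4)) (x : ℝ) :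
    (if P then x else 0) = (if C1 then x else 0) + (if C2 then x else 0)
      + (if C3 then x else 0) + (if C4 then x else 0) := by
  split_ifs <;> simp_all

lemma sum_adj (G : SimpleGraph V) [DecidableRel G.Adj] (f : Sym2 V → ℝ) :
    ∑ u : V, ∑ v : V, (if G.Adj u v then f s(u, v) else 0) = 2 * ∑ e ∈ G.edgeFinset, f e := by
  have h1 : ∑ u : V, ∑ v : V, (if G.Adj u v then f s(u, v) else 0)
      = ∑ p ∈ (Finset.univ ×ˢ Finset.univ).filter (fun p : V × V => G.Adj p.1 p.2),
          f (Sym2.mk p.1 p.2) := by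
    rw [Finset.sum_filter, Finset.sum_product]
  rw [h1, ← Finset.sum_fiberwise_of_maps_to' (t := G.edgeFinset)
      (g := fun p : V × V => Sym2.mk p.1 p.2) (fun p hp => by
        simp only [Finset.mem_filter] at hp
        simpa [SimpleGraph.mem_edgeFinset] using hp.2) f]
  rw [Finset.mul_sum]
  refine Finset.sum_congr rfl fun e he => ?_
  induction e using Sym2.ind with
  | _ x y =>
    rw [SimpleGraph.mem_edgeFinset, SimpleGraph.mem_edgeSet] at he
    have hxy : x ≠ y := he.ne
    have hfib : ((Finset.univ ×ˢ Finset.univ).filter (fun p : V × V => G.Adj p.1 p.2)).filter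
        (fun p => Sym2.mk p.1 p.2 = s(x, y)) = {(x, y), (y, x)} := by
      ext ⟨a, b⟩
      simp only [Finset.mem_filter, Finset.mem_product, Finset.mem_univ, true_and,
        Finset.mem_insert, Finset.mem_singleton, Prod.mk.injEq, Sym2.eq_iff]
      constructor
      · rintro ⟨-, (⟨rfl, rfl⟩ | ⟨rfl, rfl⟩)⟩ <;> simp
      · rintro (⟨rfl, rfl⟩ | ⟨rfl, rfl⟩)
        · exact ⟨he, Or.inl ⟨rfl, rfl⟩⟩
        · exact ⟨he.symm, Or.inr ⟨rfl, rfl⟩⟩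
    rw [hfib, Finset.sum_const]
    have hcard : ({(x, y), (y, x)} : Finset (V × V)).card = 2 := by
      rw [Finset.card_insert_of_notMem (by simp [hxy, Prod.ext_iff]), Finset.card_singleton]
    rw [hcard]
    simp [two_smul, two_mul]

lemma inner_eval (H : SimpleGraph V) [DecidableRel H.Adj] {u v : V} (huv : u ≠ v)
    (c : Sym2 V → ℝ) :
    ∑ e ∈ (swapGraph H u v).edgeFinset.filter
        (fun e => (u ∈ e ∨ v ∈ e) ∧ ¬(u ∈ e ∧ v ∈ e)), c e
      = ∑ w : V, ((if H.Adj v w ∧ w ≠ u ∧ w ≠ v then c s(u, w) else 0)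
          + (if H.Adj u w ∧ w ≠ u ∧ w ≠ v then c s(v, w) else 0)) := by
  have h2 : 2 * ∑ e ∈ (swapGraph H u v).edgeFinset.filter
        (fun e => (u ∈ e ∨ v ∈ e) ∧ ¬(u ∈ e ∧ v ∈ e)), c e
      = ∑ a : V, ∑ b : V, (if (deltaGraph H u v).Adj a b then c s(a, b) else 0) := by
    rw [delta_edgeFinset, sum_adj]
  have hpoint : ∀ a b : V,
      (if (deltaGraph H u v).Adj a b then c s(a, b) else 0)
      = (if a = u ∧ (H.Adj v b ∧ b ≠ u ∧ b ≠ v) then c s(a, b) else 0)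
        + (if a = v ∧ (H.Adj u b ∧ b ≠ u ∧ b ≠ v) then c s(a, b) else 0)
        + (if b = u ∧ (H.Adj v a ∧ a ≠ u ∧ a ≠ v) then c s(a, b) else 0)
        + (if b = v ∧ (H.Adj u a ∧ a ≠ u ∧ a ≠ v) then c s(a, b) else 0) := by
    intro a b
    refine ite_split4 (delta_adj_iff H huv a b) ?_ ?_ ?_ ?_ ?_ ?_ _
    · rintro ⟨⟨h1, -⟩, ⟨h2, -⟩⟩; exact huv (h1.symm.trans h2)
    · rintro ⟨⟨ha, -⟩, ⟨-, -, h, -⟩⟩; exact h ha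
    · rintro ⟨⟨ha, -⟩, ⟨-, -, h, -⟩⟩; exact h ha
    · rintro ⟨⟨ha, -⟩, ⟨-, -, -, h⟩⟩; exact h ha
    · rintro ⟨⟨ha, -⟩, ⟨-, -, -, h⟩⟩; exact h ha
    · rintro ⟨⟨h1, -⟩, ⟨h2, -⟩⟩; exact huv (h1.symm.trans h2)
  simp only [hpoint, Finset.sum_add_distrib] at h2
  have S1 : ∑ a : V, ∑ b : V, (if a = u ∧ (H.Adj v b ∧ b ≠ u ∧ b ≠ v) then c s(a, b) else 0)
      = ∑ w : V, (if H.Adj v w ∧ w ≠ u ∧ w ≠ v then c s(u, w) else 0) := by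
    have h : ∀ a : V, ∑ b : V, (if a = u ∧ (H.Adj v b ∧ b ≠ u ∧ b ≠ v) then c s(a, b) else 0)
        = if a = u then ∑ b : V, (if H.Adj v b ∧ b ≠ u ∧ b ≠ v then c s(a, b) else 0) else 0 := by
      intro a
      split_ifs with ha
      · exact Finset.sum_congr rfl fun b _ => by simp [ha]
      · refine Finset.sum_eq_zero fun b _ => by simp [ha]
    simp only [h]
    rw [Finset.sum_ite_eq' Finset.univ u]
    simp
  have S2 : ∑ a : V, ∑ b : V, (if a = v ∧ (H.Adj u b ∧ b ≠ u ∧ b ≠ v) then c s(a, b) else 0)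
      = ∑ w : V, (if H.Adj u w ∧ w ≠ u ∧ w ≠ v then c s(v, w) else 0) := by
    have h : ∀ a : V, ∑ b : V, (if a = v ∧ (H.Adj u b ∧ b ≠ u ∧ b ≠ v) then c s(a, b) else 0)
        = if a = v then ∑ b : V, (if H.Adj u b ∧ b ≠ u ∧ b ≠ v then c s(a, b) else 0) else 0 := by
      intro a
      split_ifs with ha
      · exact Finset.sum_congr rfl fun b _ => by simp [ha]
      · refine Finset.sum_eq_zero fun b _ => by simp [ha]
    simp only [h]
    rw [Finset.sum_ite_eq' Finset.univ v]
    simp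
  have S3 : ∑ a : V, ∑ b : V, (if b = u ∧ (H.Adj v a ∧ a ≠ u ∧ a ≠ v) then c s(a, b) else 0)
      = ∑ w : V, (if H.Adj v w ∧ w ≠ u ∧ w ≠ v then c s(u, w) else 0) := by
    have h : ∀ a : V, ∑ b : V, (if b = u ∧ (H.Adj v a ∧ a ≠ u ∧ a ≠ v) then c s(a, b) else 0)
        = if H.Adj v a ∧ a ≠ u ∧ a ≠ v then c s(u, a) else 0 := by
      intro a
      by_cases hq : H.Adj v a ∧ a ≠ u ∧ a ≠ v
      · have hb : ∀ b : V, (if b = u ∧ (H.Adj v a ∧ a ≠ u ∧ a ≠ v) then c s(a, b) else 0)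
            = if b = u then c s(a, b) else 0 := fun b => by simp [hq]
        simp only [hb]
        rw [Finset.sum_ite_eq' Finset.univ u (fun b => c s(a, b)),
          if_pos (Finset.mem_univ u), if_pos hq, Sym2.eq_swap]
      · simp [hq]
    simp only [h]
  have S4 : ∑ a : V, ∑ b : V, (if b = v ∧ (H.Adj u a ∧ a ≠ u ∧ a ≠ v) then c s(a, b) else 0)
      = ∑ w : V, (if H.Adj u w ∧ w ≠ u ∧ w ≠ v then c s(v, w) else 0) := by
    have h : ∀ a : V, ∑ b : V, (if b = v ∧ (H.Adj u a ∧ a ≠ u ∧ a ≠ v) then c s(a, b) else 0)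
        = if H.Adj u a ∧ a ≠ u ∧ a ≠ v then c s(v, a) else 0 := by
      intro a
      by_cases hq : H.Adj u a ∧ a ≠ u ∧ a ≠ v
      · have hb : ∀ b : V, (if b = v ∧ (H.Adj u a ∧ a ≠ u ∧ a ≠ v) then c s(a, b) else 0)
            = if b = v then c s(a, b) else 0 := fun b => by simp [hq]
        simp only [hb]
        rw [Finset.sum_ite_eq' Finset.univ v (fun b => c s(a, b)),
          if_pos (Finset.mem_univ v), if_pos hq, Sym2.eq_swap]
      · simp [hq]
    simp only [h]
  rw [S1, S2, S3, S4] at h2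
  rw [Finset.sum_add_distrib]
  linarith

end Helpers2

/-- The sum of the degrees (in `H`) of the two endpoints of an edge `e`. -/
noncomputable def degSum (n : ℕ) (H : SimpleGraph (Fin n)) [DecidableRel H.Adj]
    (e : Sym2 (Fin n)) : ℝ :=
  Sym2.lift ⟨fun a b => (H.degree a : ℝ) + (H.degree b : ℝ), fun a b => by ring⟩ e

theorem swapped_deltaSum_identity (n : ℕ) (H : SimpleGraph (Fin n)) [DecidableRel H.Adj]
    (c : Sym2 (Fin n) → ℝ)
    (hc : ∀ e ∈ (⊤ : SimpleGraph (Fin n)).edgeFinset, c e = 1 ∨ c e = -1) :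
    ∑ u : Fin n, ∑ v ∈ Finset.univ.filter (fun v : Fin n => u < v),
      ∑ e ∈ (swapGraph H u v).edgeFinset.filter
          (fun e => (u ∈ e ∨ v ∈ e) ∧ ¬(u ∈ e ∧ v ∈ e)), c e
    = (∑ e ∈ (⊤ : SimpleGraph (Fin n)).edgeFinset \ H.edgeFinset, degSum n H e * c e)
      + ∑ e ∈ H.edgeFinset, (degSum n H e - 2) * c e := by
  classical
  -- the summand as a function of the unordered pair
  set g : Fin n → Fin n → ℝ := fun u v => ∑ e ∈ (swapGraph H u v).edgeFinset.filter
      (fun e => (u ∈ e ∨ v ∈ e) ∧ ¬(u ∈ e ∧ v ∈ e)), c e with hg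
  have hgsym : ∀ u v, g u v = g v u := by
    intro u v
    have hgr : swapGraph H u v = swapGraph H v u := by
      ext a b; simp [swapGraph, Equiv.swap_comm]
    apply Finset.sum_congr _ (fun _ _ => rfl)
    ext e
    rw [Finset.mem_filter, Finset.mem_filter, SimpleGraph.mem_edgeFinset,
      SimpleGraph.mem_edgeFinset, hgr]
    tauto
  have hgdiag : ∀ u, g u u = 0 := by
    intro u
    rw [hg]
    simp only
    rw [Finset.filter_false_of_mem, Finset.sum_empty]
    rintro e - ⟨h1, h2⟩
    exact h2 ⟨h1.elim id id, h1.elim id id⟩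
  rw [show (∑ u : Fin n, ∑ v ∈ Finset.univ.filter (fun v : Fin n => u < v),
      ∑ e ∈ (swapGraph H u v).edgeFinset.filter
      (fun e => (u ∈ e ∨ v ∈ e) ∧ ¬(u ∈ e ∧ v ∈ e)), c e)
      = ∑ u : Fin n, ∑ v ∈ Finset.univ.filter (fun v => u < v), g u v from rfl,
    half_sym g hgsym hgdiag]
  -- rewrite g as a triple sum
  have hgeval : ∀ u v : Fin n, g u v
      = ∑ w : Fin n, ((if u ≠ v ∧ H.Adj v w ∧ w ≠ u ∧ w ≠ v then c s(u, w) else 0)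
        + (if u ≠ v ∧ H.Adj u w ∧ w ≠ u ∧ w ≠ v then c s(v, w) else 0)) := by
    intro u v
    rcases eq_or_ne u v with rfl | huv
    · rw [hgdiag]
      refine (Finset.sum_eq_zero fun w _ => ?_).symm
      rw [if_neg (by rintro ⟨h, -⟩; exact h rfl), add_zero]
    · rw [hg]
      simp only
      rw [inner_eval H huv c]
      refine Finset.sum_congr rfl fun w _ => ?_
      congr 1
      · exact (if_congr (by simp [huv]) rfl rfl)
      · exact (if_congr (by simp [huv]) rfl rfl)
  simp only [hgeval, Finset.sum_add_distrib]
  -- the two triple sums are equal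
  have hF2 : ∑ u : Fin n, ∑ v : Fin n, ∑ w : Fin n,
        (if u ≠ v ∧ H.Adj u w ∧ w ≠ u ∧ w ≠ v then c s(v, w) else 0)
      = ∑ u : Fin n, ∑ v : Fin n, ∑ w : Fin n,
        (if u ≠ v ∧ H.Adj v w ∧ w ≠ u ∧ w ≠ v then c s(u, w) else 0) := by
    rw [Finset.sum_comm]
    refine Finset.sum_congr rfl fun x _ => Finset.sum_congr rfl fun y _ =>
      Finset.sum_congr rfl fun w _ => if_congr (by tauto) rfl rfl
  rw [hF2]
  -- collapse the v-sum into a degree count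
  have hcount : ∀ u w : Fin n, (∑ v : Fin n, if u ≠ v ∧ H.Adj v w ∧ w ≠ u ∧ w ≠ v then c s(u, w) else 0)
      = if u ≠ w then (((H.degree w : ℝ) - if H.Adj u w then 1 else 0) * c s(u, w)) else 0 := by
    intro u w
    by_cases huw : u = w
    · subst huw
      rw [if_neg (by simp)]
      exact Finset.sum_eq_zero fun v _ => by
        rw [if_neg]; rintro ⟨-, -, h, -⟩; exact h rfl
    · rw [if_pos huw]
      have hfil : Finset.univ.filter (fun v => u ≠ v ∧ H.Adj v w ∧ w ≠ u ∧ w ≠ v)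
          = (H.neighborFinset w).erase u := by
        ext v
        simp only [Finset.mem_filter, Finset.mem_univ, true_and, Finset.mem_erase,
          SimpleGraph.mem_neighborFinset]
        constructor
        · rintro ⟨h1, h2, -, -⟩; exact ⟨fun e => h1 e.symm, h2.symm⟩
        · rintro ⟨h1, h2⟩
          exact ⟨fun e => h1 e.symm, h2.symm, fun e => huw e.symm, H.ne_of_adj h2⟩
      rw [← Finset.sum_filter, hfil, Finset.sum_const, nsmul_eq_mul]
      congr 1
      by_cases hadj : H.Adj u w
      · have hm : u ∈ H.neighborFinset w := by
          rw [SimpleGraph.mem_neighborFinset]; exact hadj.symm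
        have h1 : 1 ≤ (H.neighborFinset w).card := Finset.card_pos.mpr ⟨u, hm⟩
        rw [Finset.card_erase_of_mem hm, if_pos hadj, Nat.cast_sub h1,
          SimpleGraph.card_neighborFinset_eq_degree, Nat.cast_one]
      · rw [Finset.erase_eq_of_notMem
            (by rw [SimpleGraph.mem_neighborFinset]; exact fun h => hadj h.symm),
          if_neg hadj, sub_zero, SimpleGraph.card_neighborFinset_eq_degree]
  have hswap_inner : ∀ u : Fin n, ∑ v : Fin n, ∑ w : Fin n,
        (if u ≠ v ∧ H.Adj v w ∧ w ≠ u ∧ w ≠ v then c s(u, w) else 0)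
      = ∑ w : Fin n, ∑ v : Fin n, (if u ≠ v ∧ H.Adj v w ∧ w ≠ u ∧ w ≠ v then c s(u, w) else 0) :=
    fun u => Finset.sum_comm
  simp only [hswap_inner, hcount]
  -- Now the left side is 1/2 * (F + F) = F where
  -- F = ∑ u ∑ w if u ≠ w then (deg w - [adj]) * c s(u,w)
  set I : Fin n → Fin n → ℝ := fun u w => if H.Adj u w then 1 else 0 with hI
  have hFF' : ∑ u : Fin n, ∑ w : Fin n,
        (if u ≠ w then (((H.degree w : ℝ) - I u w) * c s(u, w)) else 0)
      = ∑ u : Fin n, ∑ w : Fin n,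
        (if u ≠ w then (((H.degree u : ℝ) - I u w) * c s(u, w)) else 0) := by
    rw [Finset.sum_comm]
    refine Finset.sum_congr rfl fun x _ => Finset.sum_congr rfl fun y _ => ?_
    by_cases h : x = y
    · subst h; simp
    · rw [if_pos (Ne.symm h), if_pos h, Sym2.eq_swap]
      have hII : I y x = I x y := if_congr (H.adj_comm y x) rfl rfl
      rw [hII]
  -- RHS manipulation
  have hsub : H.edgeFinset ⊆ (⊤ : SimpleGraph (Fin n)).edgeFinset :=
    SimpleGraph.edgeFinset_mono le_top
  set f : Sym2 (Fin n) → ℝ :=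
    fun e => (degSum n H e - 2 * (if e ∈ H.edgeFinset then 1 else 0)) * c e with hf
  have hRHS : (∑ e ∈ (⊤ : SimpleGraph (Fin n)).edgeFinset \ H.edgeFinset, degSum n H e * c e)
      + ∑ e ∈ H.edgeFinset, (degSum n H e - 2) * c e
      = ∑ e ∈ (⊤ : SimpleGraph (Fin n)).edgeFinset, f e := by
    rw [← Finset.sum_sdiff hsub]
    congr 1
    · refine Finset.sum_congr rfl fun e he => ?_
      rw [Finset.mem_sdiff] at he
      rw [hf]; simp only
      rw [if_neg he.2]
      ring
    · refine Finset.sum_congr rfl fun e he => ?_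
      rw [hf]; simp only
      rw [if_pos he]
      ring
  rw [hRHS]
  have htop := sum_adj (⊤ : SimpleGraph (Fin n)) f
  have htop' : ∀ u w : Fin n, (if (⊤ : SimpleGraph (Fin n)).Adj u w then f s(u, w) else 0)
      = if u ≠ w then (((H.degree u : ℝ) + (H.degree w : ℝ) - 2 * I u w) * c s(u, w)) else 0 := by
    intro u w
    have hd : degSum n H s(u, w) = (H.degree u : ℝ) + (H.degree w : ℝ) := by
      simp [degSum]
    have hm : (s(u, w) ∈ H.edgeFinset) = H.Adj u w := by
      simp [SimpleGraph.mem_edgeFinset]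
    refine if_congr (by simp) ?_ rfl
    rw [hf]; simp only
    rw [hd, hI]; simp only
    have hite : (if s(u, w) ∈ H.edgeFinset then (1:ℝ) else 0) = if H.Adj u w then 1 else 0 :=
      if_congr (SimpleGraph.mem_edgeFinset.trans (H.mem_edgeSet)) rfl rfl
    rw [hite]
  simp only [htop'] at htop
  -- conclude
  rw [show (∑ e ∈ (⊤ : SimpleGraph (Fin n)).edgeFinset, f e)
      = (1/2) * ∑ u : Fin n, ∑ w : Fin n,
        (if u ≠ w then (((H.degree u : ℝ) + (H.degree w : ℝ) - 2 * I u w) * c s(u, w)) else 0)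
      from by rw [htop]; ring]
  have hcomb : ∀ u w : Fin n,
      (if u ≠ w then (((H.degree w : ℝ) - I u w) * c s(u, w)) else 0)
      + (if u ≠ w then (((H.degree u : ℝ) - I u w) * c s(u, w)) else 0)
      = (if u ≠ w then (((H.degree u : ℝ) + (H.degree w : ℝ) - 2 * I u w) * c s(u, w)) else 0) := by
    intro u w
    split_ifs <;> ring
  calc (1:ℝ)/2 * (∑ u : Fin n, ∑ w : Fin n,
        (if u ≠ w then (((H.degree w : ℝ) - I u w) * c s(u, w)) else 0)
      + ∑ u : Fin n, ∑ w : Fin n,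
        (if u ≠ w then (((H.degree w : ℝ) - I u w) * c s(u, w)) else 0))
      = (1:ℝ)/2 * (∑ u : Fin n, ∑ w : Fin n,
        (if u ≠ w then (((H.degree w : ℝ) - I u w) * c s(u, w)) else 0)
      + ∑ u : Fin n, ∑ w : Fin n,
        (if u ≠ w then (((H.degree u : ℝ) - I u w) * c s(u, w)) else 0)) := by rw [hFF']
    _ = (1:ℝ)/2 * ∑ u : Fin n, ∑ w : Fin n,
        (if u ≠ w then (((H.degree u : ℝ) + (H.degree w : ℝ) - 2 * I u w) * c s(u, w)) else 0) := by
        rw [← Finset.sum_add_distrib]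
        congr 1
        refine Finset.sum_congr rfl fun u _ => ?_
        rw [← Finset.sum_add_distrib]
        exact Finset.sum_congr rfl fun w _ => hcomb u w
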